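/- Let G be a group acting linearly on a finite-dimensional real vector space V, let X₁,…,X_p be subspaces forming a direct sum decomposition V = X₁ ⊕ ⋯ ⊕ X_p which is transitively permuted by the G-action, and suppose a normal subgroup G⁰ of finite index preserves each Xᵢ. Then all Xᵢ have equal dimension d/p (where d = dim V), and for each g ∈ G⁰ and each i, the set {[h] ∈ G/G⁰ : h·Xᵢ = X_j} as j ranges over 1,…,p forms a partition of G/G⁰ into cosets of equal cardinality |G/G⁰|/p; consequently if g ∈ G⁰ acts on each Xᵢ by a scalar γᵢ(g), then ∏_{[h]∈G/G⁰} |γᵢ(hgh^{-1})| = |det g|^{|G/G⁰|/d} for each i. -/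

import Mathlib

section Aux

variable {G : Type*} [Group G] {V : Type*} [AddCommGroup V] [Module ℝ V]

/-- `ρ g` as a linear equivalence. -/
noncomputable def stmt18Equiv (ρ : Representation ℝ G V) (g : G) : V ≃ₗ[ℝ] V :=
  LinearEquiv.ofLinear (ρ g) (ρ g⁻¹)
    (by rw [← Module.End.mul_eq_comp, ← map_mul, mul_inv_cancel, map_one]; rfl)
    (by rw [← Module.End.mul_eq_comp, ← map_mul, inv_mul_cancel, map_one]; rfl)

lemma stmt18_rho_injective (ρ : Representation ℝ G V) (g : G) :
    Function.Injective (ρ g) :=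
  (stmt18Equiv ρ g).injective

lemma stmt18_finrank_map (ρ : Representation ℝ G V) (g : G) (Y : Submodule ℝ V) :
    Module.finrank ℝ (Y.map (ρ g)) = Module.finrank ℝ Y := by
  have h : Y.map (ρ g) = Y.map (stmt18Equiv ρ g : V →ₗ[ℝ] V) := rfl
  rw [h, ← LinearEquiv.finrank_map_eq (stmt18Equiv ρ g) Y]

lemma stmt18_map_map (ρ : Representation ℝ G V) (a b : G) (Y : Submodule ℝ V) :
    (Y.map (ρ b)).map (ρ a) = Y.map (ρ (a * b)) := by
  rw [map_mul, Module.End.mul_eq_comp, Submodule.map_comp]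

lemma stmt18_map_inj (ρ : Representation ℝ G V) (g : G) {Y Z : Submodule ℝ V}
    (h : Y.map (ρ g) = Z.map (ρ g)) : Y = Z :=
  Submodule.map_injective_of_injective (stmt18_rho_injective ρ g) h

lemma stmt18_map_inv (ρ : Representation ℝ G V) (g : G) {Y Z : Submodule ℝ V}
    (h : Y.map (ρ g) = Z) : Y = Z.map (ρ g⁻¹) := by
  rw [← h, stmt18_map_map, inv_mul_cancel, map_one, Module.End.one_eq_id,
    Submodule.map_id]

end Aux

/-- let a group `G` act linearly on a finite-dimensional real vector
space `V`, let `V = X₁ ⊕ ⋯ ⊕ X_p` be a direct sum decomposition transitively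
permuted by `G`, with each `Xᵢ` preserved by a normal finite-index subgroup `G₀`.
Then all `Xᵢ` have dimension `d/p`; for each `i, j` the set of cosets
`{[h] ∈ G/G₀ : h·Xᵢ = X_j}` has cardinality `|G/G₀|/p`; and if each `g ∈ G₀` acts
on `Xᵢ` by the scalar `γᵢ(g)` then
`∏_{[h]∈G/G₀} |γᵢ(hgh⁻¹)| = |det g|^{|G/G₀|/d}`. -/
theorem stmt18 {p : ℕ} (hp : 0 < p) (G : Type*) [Group G]
    (V : Type*) [AddCommGroup V] [Module ℝ V] [FiniteDimensional ℝ V]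
    (hV : 0 < Module.finrank ℝ V)
    (ρ : Representation ℝ G V)
    (X : Fin p → Submodule ℝ V)
    (hsup : (⨆ i, X i) = ⊤)
    (hdisj : ∀ i : Fin p, Disjoint (X i) (⨆ j ∈ ({i}ᶜ : Set (Fin p)), X j))
    (G₀ : Subgroup G) [G₀.Normal] [Finite (G ⧸ G₀)]
    (hpres : ∀ g ∈ G₀, ∀ i, (X i).map (ρ g) = X i)
    (hperm : ∀ (g : G) (i : Fin p), ∃ j, (X i).map (ρ g) = X j)
    (htrans : ∀ i j : Fin p, ∃ g : G, (X i).map (ρ g) = X j)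
    (γ : G → Fin p → ℝ)
    (hγ : ∀ g ∈ G₀, ∀ i, ∀ v ∈ X i, ρ g v = γ g i • v) :
    (∀ i, Module.finrank ℝ (X i) * p = Module.finrank ℝ V) ∧
    (∀ i j : Fin p,
      Nat.card {q : G ⧸ G₀ // (X i).map (ρ (Quotient.out q)) = X j} * p =
        Nat.card (G ⧸ G₀)) ∧
    (∀ g ∈ G₀, ∀ i : Fin p,
      ∏ᶠ q : G ⧸ G₀, |γ ((Quotient.out q) * g * (Quotient.out q)⁻¹) i| =
        |LinearMap.det (ρ g)| ^
          ((Nat.card (G ⧸ G₀) : ℝ) / (Module.finrank ℝ V : ℝ))) := by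
  classical
  letI : Fintype (G ⧸ G₀) := Fintype.ofFinite _
  set d := Module.finrank ℝ V with hd
  set N := Nat.card (G ⧸ G₀) with hN
  -- all `X i` have the same dimension
  have hdim : ∀ i j : Fin p, Module.finrank ℝ (X i) = Module.finrank ℝ (X j) := by
    intro i j
    obtain ⟨g, hg⟩ := htrans i j
    rw [← hg, stmt18_finrank_map]
  -- internal direct sum
  have hind : iSupIndep X := by
    rw [iSupIndep_def]
    intro i
    have : (⨆ j ∈ ({i}ᶜ : Set (Fin p)), X j) = ⨆ (j) (_ : j ≠ i), X j := by
      apply iSup_congr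
      intro j
      simp [Set.mem_compl_singleton_iff]
    rw [← this]
    exact hdisj i
  have hInternal : DirectSum.IsInternal X :=
    DirectSum.isInternal_submodule_of_iSupIndep_of_iSup_eq_top hind hsup
  set n : Fin p → ℕ := fun i => Module.finrank ℝ (X i) with hn
  let b : ∀ i, Module.Basis (Fin (n i)) ℝ (X i) := fun i => Module.finBasis ℝ (X i)
  let B : Module.Basis (Σ i : Fin p, Fin (n i)) ℝ V := hInternal.collectedBasis b
  have hdsum : d = ∑ i, n i := by
    rw [hd, Module.finrank_eq_card_basis B, Fintype.card_sigma]
    simp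
  -- Part 1
  have part1 : ∀ i, n i * p = d := by
    intro i
    rw [hdsum]
    have : ∀ j, n j = n i := fun j => hdim j i
    rw [Finset.sum_congr rfl (fun j _ => this j), Finset.sum_const, Finset.card_univ,
      Fintype.card_fin, smul_eq_mul, mul_comm]
  have hnpos : ∀ i, 0 < n i := by
    intro i
    rcases Nat.eq_zero_or_pos (n i) with h | h
    · exfalso
      have h1 := part1 i
      rw [h, zero_mul] at h1
      omega
    · exact h
  have hXne : ∀ i, X i ≠ ⊥ := by
    intro i h
    have h2 : n i = 0 := by rw [hn]; simp [h]
    have := hnpos i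
    omega
  have hXinj : Function.Injective X := by
    intro i j hij
    by_contra hne
    have hdisj' : Disjoint (X i) (X j) := hind.pairwiseDisjoint hne
    rw [hij, disjoint_self] at hdisj'
    exact hXne j hdisj'
  -- well-definedness modulo cosets
  have hwd : ∀ (a : G) (i : Fin p),
      (X i).map (ρ (Quotient.out (QuotientGroup.mk (s := G₀) a))) = (X i).map (ρ a) := by
    intro a i
    set q : G ⧸ G₀ := QuotientGroup.mk a with hq
    have hout : QuotientGroup.mk (s := G₀) q.out = QuotientGroup.mk a := by
      rw [QuotientGroup.out_eq']
    have hmem : q.out⁻¹ * a ∈ G₀ := (QuotientGroup.eq (s := G₀)).mp hout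
    have hrw : a = q.out * (q.out⁻¹ * a) := by group
    conv_rhs => rw [hrw]
    rw [← stmt18_map_map, hpres _ hmem]
  -- Part 2
  have part2 : ∀ i j : Fin p,
      Nat.card {q : G ⧸ G₀ // (X i).map (ρ (Quotient.out q)) = X j} * p = N := by
    intro i j
    have hcongr : ∀ j j' : Fin p,
        Nat.card {q : G ⧸ G₀ // (X i).map (ρ (Quotient.out q)) = X j} =
        Nat.card {q : G ⧸ G₀ // (X i).map (ρ (Quotient.out q)) = X j'} := by
      intro j j'
      obtain ⟨g, hg⟩ := htrans j j'
      have key : ∀ (g : G) (q : G ⧸ G₀),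
          (X i).map (ρ (Quotient.out ((QuotientGroup.mk g) * q))) =
            ((X i).map (ρ (Quotient.out q))).map (ρ g) := by
        intro g q
        have h1 : (QuotientGroup.mk (s := G₀) g) * q =
            QuotientGroup.mk (g * Quotient.out q) := by
          rw [QuotientGroup.mk_mul, QuotientGroup.out_eq']
        rw [h1, hwd, ← stmt18_map_map]
      apply Nat.card_congr
      refine Equiv.subtypeEquiv (Equiv.mulLeft (QuotientGroup.mk g)) ?_
      intro q
      simp only [Equiv.coe_mulLeft]
      constructor
      · intro h
        rw [key, h, hg]
      · intro h
        rw [key] at h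
        exact stmt18_map_inj ρ g (h.trans hg.symm)
    have hF : ∀ q : G ⧸ G₀, ∃ j, (X i).map (ρ (Quotient.out q)) = X j :=
      fun q => hperm _ i
    set F : G ⧸ G₀ → Fin p := fun q => (hF q).choose with hFdef
    have hFspec : ∀ q, (X i).map (ρ (Quotient.out q)) = X (F q) :=
      fun q => (hF q).choose_spec
    have hsum : N = ∑ j : Fin p, Nat.card
        {q : G ⧸ G₀ // (X i).map (ρ (Quotient.out q)) = X j} := by
      rw [hN, Nat.card_eq_fintype_card, ← Finset.card_univ,
        Finset.card_eq_sum_card_fiberwise (f := F) (t := Finset.univ)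
          (fun q _ => Finset.mem_univ _)]
      apply Finset.sum_congr rfl
      intro j _
      rw [Nat.card_eq_fintype_card, Fintype.card_subtype]
      congr 1
      apply Finset.filter_congr
      intro q _
      constructor
      · intro h; rw [← h]; exact hFspec q
      · intro h; exact hXinj ((hFspec q).symm.trans h)
    rw [hsum, Finset.sum_congr rfl (fun j' _ => hcongr j' j), Finset.sum_const,
      Finset.card_univ, Fintype.card_fin, smul_eq_mul, mul_comm]
  -- Part 3
  refine ⟨part1, part2, ?_⟩
  intro g hg i
  have hγne : ∀ j, γ g j ≠ 0 := by
    intro j hzero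
    obtain ⟨v, hv, hvne⟩ := Submodule.exists_mem_ne_zero_of_ne_bot (hXne j)
    have h1 := hγ g hg j v hv
    rw [hzero, zero_smul] at h1
    exact hvne (stmt18_rho_injective ρ g (h1.trans (map_zero (ρ g)).symm))
  -- determinant formula
  have hdet : LinearMap.det (ρ g) = ∏ k : Σ i : Fin p, Fin (n i), γ g k.1 := by
    rw [← LinearMap.det_toMatrix B]
    have hmat : LinearMap.toMatrix B B (ρ g) =
        Matrix.diagonal (fun k : Σ i : Fin p, Fin (n i) => γ g k.1) := by
      ext k l
      rw [LinearMap.toMatrix_apply]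
      have hBl : (B l : V) ∈ X l.1 := hInternal.collectedBasis_mem b l
      have h1 : ρ g (B l) = γ g l.1 • (B l) := hγ g hg l.1 (B l) hBl
      rw [h1, map_smul, B.repr_self, Finsupp.smul_single, smul_eq_mul, mul_one,
        Finsupp.single_apply, Matrix.diagonal_apply]
      by_cases h : k = l
      · subst h; simp
      · simp [h, Ne.symm h]
    rw [hmat, Matrix.det_diagonal]
  set e := n i with he
  set A := ∏ j : Fin p, |γ g j| with hA
  have hApos : 0 < A := Finset.prod_pos (fun j _ => abs_pos.mpr (hγne j))
  have habs : |LinearMap.det (ρ g)| = A ^ e := by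
    rw [hdet, Finset.abs_prod, ← Finset.univ_sigma_univ, Finset.prod_sigma]
    have h1 : ∀ j : Fin p, ∏ _a : Fin (n j), |γ g j| = |γ g j| ^ e := by
      intro j
      rw [Finset.prod_const, Finset.card_univ, Fintype.card_fin]
      congr 1
      exact hdim j i
    calc (∏ j : Fin p, ∏ _a : Fin (n j), |γ g j|) = ∏ j : Fin p, |γ g j| ^ e :=
          Finset.prod_congr rfl (fun j _ => h1 j)
      _ = A ^ e := by rw [hA, ← Finset.prod_pow]
  -- conjugation
  have hconj : ∀ (h : G) (j : Fin p), (X j).map (ρ h) = X i →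
      γ (h * g * h⁻¹) i = γ g j := by
    intro h j hmap
    obtain ⟨w, hw, hwne⟩ := Submodule.exists_mem_ne_zero_of_ne_bot (hXne j)
    have hv : ρ h w ∈ X i := hmap ▸ Submodule.mem_map_of_mem hw
    have hvne : ρ h w ≠ 0 :=
      fun h0 => hwne (stmt18_rho_injective ρ h (h0.trans (map_zero (ρ h)).symm))
    have hmem : h * g * h⁻¹ ∈ G₀ := Subgroup.Normal.conj_mem ‹G₀.Normal› g hg h
    have e1 : ρ (h * g * h⁻¹) (ρ h w) = γ (h * g * h⁻¹) i • ρ h w := hγ _ hmem i _ hv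
    have e2 : ρ (h * g * h⁻¹) (ρ h w) = γ g j • ρ h w := by
      have hmul : (h * g * h⁻¹) * h = h * g := by group
      rw [← Module.End.mul_apply, ← map_mul, hmul, map_mul, Module.End.mul_apply,
        hγ g hg j w hw, map_smul]
    exact smul_left_injective ℝ hvne (e1.symm.trans e2)
  -- fiber structure of the product
  have hJ : ∀ q : G ⧸ G₀, ∃ j, (X i).map (ρ (Quotient.out q)⁻¹) = X j :=
    fun q => hperm _ i
  set J : G ⧸ G₀ → Fin p := fun q => (hJ q).choose with hJdef
  have hJspec : ∀ q, (X i).map (ρ (Quotient.out q)⁻¹) = X (J q) :=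
    fun q => (hJ q).choose_spec
  have hJmap : ∀ q, (X (J q)).map (ρ (Quotient.out q)) = X i := by
    intro q
    rw [← hJspec q, stmt18_map_map, mul_inv_cancel, map_one, Module.End.one_eq_id,
      Submodule.map_id]
  set c := N / p with hc'
  have hcard : ∀ j : Fin p,
      Nat.card {q : G ⧸ G₀ // (X j).map (ρ (Quotient.out q)) = X i} = c :=
    fun j => (Nat.div_eq_of_eq_mul_left hp (part2 j i).symm).symm
  have hcp : c * p = N := by rw [← hcard i]; exact part2 i i
  have hfib : ∀ j, (Finset.univ.filter (fun q => J q = j)).card =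
      Nat.card {q : G ⧸ G₀ // (X j).map (ρ (Quotient.out q)) = X i} := by
    intro j
    rw [Nat.card_eq_fintype_card, Fintype.card_subtype]
    congr 1
    apply Finset.filter_congr
    intro q _
    constructor
    · intro h; rw [← h]; exact hJmap q
    · intro h
      have h2 : X j = X (J q) := by
        have h1 := stmt18_map_inv ρ (Quotient.out q) h
        rw [h1, hJspec q]
      exact (hXinj h2).symm
  -- put everything together
  rw [finprod_eq_prod_of_fintype]
  have hterm : ∀ q : G ⧸ G₀,
      |γ (Quotient.out q * g * (Quotient.out q)⁻¹) i| = |γ g (J q)| :=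
    fun q => by rw [hconj (Quotient.out q) (J q) (hJmap q)]
  rw [Finset.prod_congr rfl (fun q _ => hterm q)]
  rw [← Finset.prod_fiberwise_of_maps_to (g := J) (t := Finset.univ)
    (fun q _ => Finset.mem_univ _)]
  have hinner : ∀ j : Fin p,
      (∏ q ∈ Finset.univ.filter (fun q => J q = j), |γ g (J q)|) = |γ g j| ^ c := by
    intro j
    calc (∏ q ∈ Finset.univ.filter (fun q => J q = j), |γ g (J q)|)
        = ∏ _q ∈ Finset.univ.filter (fun q => J q = j), |γ g j| :=
          Finset.prod_congr rfl (fun q hq => by rw [(Finset.mem_filter.mp hq).2])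
      _ = |γ g j| ^ c := by rw [Finset.prod_const, hfib j, hcard j]
  rw [Finset.prod_congr rfl (fun j _ => hinner j), Finset.prod_pow, ← hA, habs]
  have hd0 : (d : ℝ) ≠ 0 := Nat.cast_ne_zero.mpr (by omega)
  have h1 : ((A : ℝ) ^ e) ^ ((N : ℝ) / (d : ℝ)) = A ^ (((e : ℝ) * N) / (d : ℝ)) := by
    rw [← Real.rpow_natCast A e, ← Real.rpow_mul hApos.le]
    congr 1
    rw [mul_div_assoc]
  have h2 : ((e : ℝ) * N) / (d : ℝ) = (c : ℝ) := by
    rw [div_eq_iff hd0]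
    have h3 : e * N = c * d := by
      calc e * N = e * (c * p) := by rw [hcp]
        _ = c * (e * p) := by ring
        _ = c * d := by rw [part1 i]
    exact_mod_cast h3
  rw [h1, h2, Real.rpow_natCast]
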